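/- arXiv:1411.7346 — 2 statements merged into one kernel-verified Lean document; each statement's English description precedes it below -/
import Mathlib

section
/- Hitting Lemma (additive form): Let a₁,...,a_q be points in the interval [0, L]. For a point x ∈ [0, L] and j ≥ 1, let ℓ_j^x (resp. r_j^x) be the distance from x to the j-th point of {a₁,...,a_q} to its left (resp. right), and define q_x = min over j of min(ℓ_j^x/j, r_j^x/j). For c > 0, let S_c = {x ∈ [0,L] : q_x < c}. Then the Lebesgue measure of S_c is at most 2cq. -/
open MeasureTheory

open Classical in
/-- The "left-bad" set is measurable. -/
lemma hitting_bad_measurable (q : ℕ) (L c : ℝ) (a : Fin q → ℝ) :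
    MeasurableSet {x : ℝ | x ∈ Set.Icc 0 L ∧ ∃ j : ℕ, 1 ≤ j ∧
      j ≤ (Finset.univ.filter (fun i => x - c * j < a i ∧ a i ≤ x)).card} := by
  have hfm : ∀ j : ℕ, Measurable fun x : ℝ =>
      (Finset.univ.filter (fun i => x - c * j < a i ∧ a i ≤ x)).card := by
    intro j
    simp only [Finset.card_filter]
    apply Finset.measurable_sum
    intro i _
    have hset : {x : ℝ | x - c * j < a i ∧ a i ≤ x} = Set.Ico (a i) (a i + c * j) := by
      ext x
      simp only [Set.mem_setOf_eq, Set.mem_Ico, sub_lt_iff_lt_add]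
      constructor
      · rintro ⟨h1, h2⟩; exact ⟨h2, by linarith⟩
      · rintro ⟨h1, h2⟩; exact ⟨by linarith, h1⟩
    exact Measurable.ite (hset ▸ measurableSet_Ico) measurable_const measurable_const
  have heq : {x : ℝ | x ∈ Set.Icc 0 L ∧ ∃ j : ℕ, 1 ≤ j ∧
      j ≤ (Finset.univ.filter (fun i => x - c * j < a i ∧ a i ≤ x)).card}
      = Set.Icc 0 L ∩ ⋃ (j : ℕ), ⋃ (_ : 1 ≤ j),
        {x : ℝ | j ≤ (Finset.univ.filter (fun i => x - c * j < a i ∧ a i ≤ x)).card} := by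
    ext x
    simp only [Set.mem_setOf_eq, Set.mem_inter_iff, Set.mem_iUnion, exists_prop]
  rw [heq]
  refine measurableSet_Icc.inter (MeasurableSet.iUnion fun j => MeasurableSet.iUnion fun _ => ?_)
  exact (hfm j) measurableSet_Ici

open Classical in
/-- One-sided (left) hitting bound. -/
lemma hitting_left (q : ℕ) (L c : ℝ) (hL : 0 ≤ L) (hc : 0 < c) (a : Fin q → ℝ) :
    MeasureTheory.volume
        {x : ℝ | x ∈ Set.Icc 0 L ∧ ∃ j : ℕ, 1 ≤ j ∧
          j ≤ (Finset.univ.filter (fun i => x - c * j < a i ∧ a i ≤ x)).card}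
      ≤ ENNReal.ofReal (c * q) := by
  set B := {x : ℝ | x ∈ Set.Icc 0 L ∧ ∃ j : ℕ, 1 ≤ j ∧
      j ≤ (Finset.univ.filter (fun i => x - c * j < a i ∧ a i ≤ x)).card} with hBdef
  have hBmeas : MeasurableSet B := hitting_bad_measurable q L c a
  set N : ℝ → ℕ := fun x => (Finset.univ.filter (fun i => a i ≤ x)).card with hNdef
  have hNmono : ∀ {x y : ℝ}, x ≤ y → N x ≤ N y := by
    intro x y hxy
    exact Finset.card_le_card (Finset.monotone_filter_right _ (fun i _ hi => le_trans hi hxy))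
  have hNq : ∀ x, N x ≤ q := by
    intro x
    calc N x ≤ Finset.univ.card := Finset.card_filter_le _ _
    _ = q := by simp
  set h : ℝ → ℝ := fun x => x - c * N x with hhdef
  have hstep : ∀ {x y : ℝ}, x ≤ y → h y - h x ≤ y - x := by
    intro x y hxy
    have h1 : (N x : ℝ) ≤ N y := Nat.cast_le.mpr (hNmono hxy)
    have h2 : c * N x ≤ c * N y := by nlinarith
    simp only [hhdef]; linarith
  have hsplit : ∀ (x : ℝ) (j : ℕ),
      j ≤ (Finset.univ.filter (fun i => x - c * j < a i ∧ a i ≤ x)).card →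
      N (x - c * j) + j ≤ N x := by
    intro x j hj
    have hdisj : Disjoint (Finset.univ.filter (fun i => a i ≤ x - c * j))
        (Finset.univ.filter (fun i => x - c * j < a i ∧ a i ≤ x)) := by
      rw [Finset.disjoint_left]
      intro i hi1 hi2
      simp only [Finset.mem_filter] at hi1 hi2
      exact absurd hi1.2 (not_le.mpr hi2.2.1)
    have hsub : (Finset.univ.filter (fun i => a i ≤ x - c * j)) ∪
        (Finset.univ.filter (fun i => x - c * j < a i ∧ a i ≤ x))
        ⊆ Finset.univ.filter (fun i => a i ≤ x) := by
      intro i hi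
      rcases Finset.mem_union.mp hi with hi | hi <;> simp only [Finset.mem_filter] at hi ⊢
      · refine ⟨hi.1, le_trans hi.2 ?_⟩
        have : (0:ℝ) ≤ c * j := by positivity
        linarith
      · exact ⟨hi.1, hi.2.2⟩
    calc N (x - c * j) + j
        ≤ (Finset.univ.filter (fun i => a i ≤ x - c * j)).card
          + (Finset.univ.filter (fun i => x - c * j < a i ∧ a i ≤ x)).card :=
          Nat.add_le_add le_rfl hj
      _ = ((Finset.univ.filter (fun i => a i ≤ x - c * j)) ∪
          (Finset.univ.filter (fun i => x - c * j < a i ∧ a i ≤ x))).card :=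
          (Finset.card_union_of_disjoint hdisj).symm
      _ ≤ N x := Finset.card_le_card hsub
  have hbad : ∀ (x : ℝ) (j : ℕ), 1 ≤ j →
      j ≤ (Finset.univ.filter (fun i => x - c * j < a i ∧ a i ≤ x)).card →
      h x ≤ h (x - c * j) := by
    intro x j hj1 hj
    have hcast : (N (x - c * j) : ℝ) + j ≤ N x := by exact_mod_cast hsplit x j hj
    have : c * ((N (x - c * j) : ℝ) + j) ≤ c * N x := by nlinarith
    simp only [hhdef]
    nlinarith
  rcases le_or_gt L (c * q) with hcase | hcase
  · calc MeasureTheory.volume B ≤ MeasureTheory.volume (Set.Icc (0:ℝ) L) :=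
        measure_mono (fun x hx => hx.1)
    _ = ENNReal.ofReal L := by rw [Real.volume_Icc, sub_zero]
    _ ≤ ENNReal.ofReal (c * q) := ENNReal.ofReal_le_ofReal hcase
  set t : ℝ := L - c * q with htdef
  have ht : 0 < t := by simp only [htdef]; linarith
  set Sv : ℝ → Set ℝ := fun v => {x | x ∈ Set.Icc 0 L ∧ v ≤ h x} with hSvdef
  have hLmem : ∀ v ≤ t, L ∈ Sv v := by
    intro v hv
    refine ⟨Set.right_mem_Icc.mpr hL, ?_⟩
    have h1 : (N L : ℝ) ≤ q := Nat.cast_le.mpr (hNq L)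
    have h2 : t ≤ h L := by simp only [hhdef, htdef]; nlinarith
    linarith
  have hSne : ∀ v ≤ t, (Sv v).Nonempty := fun v hv => ⟨L, hLmem v hv⟩
  have hSbdd : ∀ v, BddBelow (Sv v) := fun v => ⟨0, fun x hx => hx.1.1⟩
  set Φ : ℝ → ℝ := fun v => sInf (Sv v) with hΦdef
  have hΦmem : ∀ v ∈ Set.Ioc 0 t, Φ v ∈ Set.Icc 0 L := fun v hv =>
    ⟨le_csInf (hSne v hv.2) (fun x hx => hx.1.1), csInf_le (hSbdd v) (hLmem v hv.2)⟩
  -- below Φ v, h < v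
  have hlt : ∀ v ∈ Set.Ioc 0 t, ∀ y, y < Φ v → h y < v := by
    intro v hv y hy
    rcases lt_or_ge y 0 with hy0 | hy0
    · have : c * (N y : ℝ) ≥ 0 := by positivity
      have : h y ≤ y := by simp only [hhdef]; linarith
      linarith [hv.1]
    · have hyL : y ≤ L := le_trans hy.le (hΦmem v hv).2
      by_contra hcon
      push_neg at hcon
      exact absurd (csInf_le (hSbdd v) ⟨⟨hy0, hyL⟩, hcon⟩) (not_le.mpr hy)
  -- h (Φ v) = v
  have hΦeq : ∀ v ∈ Set.Ioc 0 t, h (Φ v) = v := by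
    intro v hv
    have hle : h (Φ v) ≤ v := by
      by_contra hcon
      push_neg at hcon
      have hεpos : 0 < (h (Φ v) - v) / 2 := div_pos (sub_pos.mpr hcon) two_pos
      have hz : h (Φ v - (h (Φ v) - v) / 2) < v := hlt v hv _ (by linarith)
      have h5 := hstep (x := Φ v - (h (Φ v) - v) / 2) (y := Φ v) (by linarith)
      linarith
    have hge : v ≤ h (Φ v) := by
      -- right-constancy of N at Φ v
      obtain ⟨ε, hεpos, hεconst⟩ : ∃ ε > 0, ∀ z, Φ v ≤ z → z < Φ v + ε → N z = N (Φ v) := by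
        set F := Finset.univ.filter (fun i => Φ v < a i) with hF
        by_cases hFne : F.Nonempty
        · refine ⟨F.inf' hFne (fun i => a i) - Φ v, ?_, ?_⟩
          · have h6 : Φ v < F.inf' hFne (fun i => a i) := by
              rw [Finset.lt_inf'_iff]
              intro i hi
              exact (Finset.mem_filter.mp hi).2
            simpa using sub_pos.mpr h6
          · intro z hz1 hz2
            have hz3 : z < F.inf' hFne (fun i => a i) := by linarith
            simp only [hNdef]
            congr 1
            apply Finset.filter_congr
            intro i _
            constructor
            · intro hiz
              by_contra hiv
              push_neg at hiv
              have hiF : i ∈ F := Finset.mem_filter.mpr ⟨Finset.mem_univ i, hiv⟩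
              have := Finset.inf'_le (fun i => a i) hiF
              linarith
            · intro hiv; linarith
        · refine ⟨1, one_pos, fun z hz1 hz2 => ?_⟩
          simp only [hNdef]
          congr 1
          apply Finset.filter_congr
          intro i _
          have hia : a i ≤ Φ v := by
            by_contra hcon
            push_neg at hcon
            exact hFne ⟨i, Finset.mem_filter.mpr ⟨Finset.mem_univ i, hcon⟩⟩
          constructor
          · intro _; exact hia
          · intro _; linarith
      by_contra hcon
      push_neg at hcon
      set ε' := min ε (v - h (Φ v)) with hε'
      have hε'pos : 0 < ε' := lt_min hεpos (by linarith)
      obtain ⟨z, hzS, hzlt⟩ := Real.lt_sInf_add_pos (hSne v hv.2) hε'pos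
      have hzge : Φ v ≤ z := csInf_le (hSbdd v) hzS
      have hzN : N z = N (Φ v) := hεconst z hzge (by
        have : ε' ≤ ε := min_le_left _ _
        have : z < sInf (Sv v) + ε' := hzlt
        simp only [hΦdef]
        linarith)
      have hzh : v ≤ h z := hzS.2
      have : h z = z - c * N (Φ v) := by simp only [hhdef, hzN]
      have hΦh : h (Φ v) = Φ v - c * N (Φ v) := rfl
      have h1 : z < Φ v + ε' := by
        have : z < sInf (Sv v) + ε' := hzlt
        simpa [hΦdef] using this
      have h2 : ε' ≤ v - h (Φ v) := min_le_right _ _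
      linarith
    linarith
  -- monotonicity of Φ and the Lipschitz property of h on the image
  have hΦmono : ∀ v ∈ Set.Ioc 0 t, ∀ w ∈ Set.Ioc 0 t, v ≤ w → Φ v ≤ Φ w := by
    intro v hv w hw hvw
    exact csInf_le_csInf (hSbdd v) (hSne w hw.2) (fun x hx => ⟨hx.1, le_trans hvw hx.2⟩)
  set A := Φ '' (Set.Ioc 0 t) with hAdef
  have hlip : LipschitzOnWith 1 h A := by
    rw [lipschitzOnWith_iff_dist_le_mul]
    rintro x ⟨v, hv, rfl⟩ y ⟨w, hw, rfl⟩
    have key : ∀ p ∈ Set.Ioc (0:ℝ) t, ∀ r ∈ Set.Ioc (0:ℝ) t, p ≤ r →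
        dist (h (Φ p)) (h (Φ r)) ≤ dist (Φ p) (Φ r) := by
      intro p hp r hr hpr
      have h1 : Φ p ≤ Φ r := hΦmono p hp r hr hpr
      have h2 : h (Φ r) - h (Φ p) ≤ Φ r - Φ p := hstep h1
      have h3 : h (Φ p) ≤ h (Φ r) := by rw [hΦeq p hp, hΦeq r hr]; exact hpr
      rw [Real.dist_eq, Real.dist_eq, abs_of_nonpos (by linarith), abs_of_nonpos (by linarith)]
      linarith
    rw [NNReal.coe_one, one_mul]
    rcases le_total v w with hvw | hvw
    · exact key v hv w hw hvw
    · rw [dist_comm, dist_comm (Φ v)]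
      exact key w hw v hv hvw
  have himg : h '' A = Set.Ioc 0 t := by
    rw [hAdef, Set.image_image]
    ext w
    constructor
    · rintro ⟨v, hv, rfl⟩
      simpa [hΦeq v hv] using hv
    · intro hw
      exact ⟨w, hw, hΦeq w hw⟩
  have hA1 : ENNReal.ofReal t ≤ MeasureTheory.volume A := by
    have e1 : MeasureTheory.volume (Set.Ioc (0:ℝ) t) = ENNReal.ofReal t := by
      rw [Real.volume_Ioc, sub_zero]
    have e2 := hlip.hausdorffMeasure_image_le (d := 1) zero_le_one
    rw [himg] at e2
    calc ENNReal.ofReal t = MeasureTheory.volume (Set.Ioc (0:ℝ) t) := e1.symm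
      _ = μH[1] (Set.Ioc (0:ℝ) t) := by rw [MeasureTheory.hausdorffMeasure_real]
      _ ≤ μH[1] A := by simpa using e2
      _ = MeasureTheory.volume A := by rw [MeasureTheory.hausdorffMeasure_real]
  have hAsub : A ⊆ Set.Icc 0 L \ B := by
    rintro x ⟨v, hv, rfl⟩
    refine ⟨hΦmem v hv, ?_⟩
    rintro ⟨-, j, hj1, hjcard⟩
    have hxj : Φ v - c * j < Φ v := by
      have : (0:ℝ) < c * j := by
        have : (1:ℝ) ≤ j := by exact_mod_cast hj1
        nlinarith
      linarith
    have := hbad (Φ v) j hj1 hjcard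
    have := hlt v hv _ hxj
    rw [hΦeq v hv] at *
    linarith
  -- conclude
  have hBsub : B ⊆ Set.Icc 0 L := fun x hx => hx.1
  have hkey := MeasureTheory.measure_inter_add_diff (μ := MeasureTheory.volume)
    (Set.Icc (0:ℝ) L) hBmeas
  rw [Set.inter_eq_self_of_subset_right hBsub] at hkey
  have h2 : MeasureTheory.volume B + ENNReal.ofReal t
      ≤ ENNReal.ofReal (c * q) + ENNReal.ofReal t := by
    calc MeasureTheory.volume B + ENNReal.ofReal t
        ≤ MeasureTheory.volume B + MeasureTheory.volume (Set.Icc (0:ℝ) L \ B) :=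
          add_le_add le_rfl (le_trans hA1 (measure_mono hAsub))
      _ = MeasureTheory.volume (Set.Icc (0:ℝ) L) := hkey
      _ = ENNReal.ofReal L := by rw [Real.volume_Icc, sub_zero]
      _ = ENNReal.ofReal (c * q + t) := by rw [htdef]; ring_nf
      _ = ENNReal.ofReal (c * q) + ENNReal.ofReal t := by
          rw [ENNReal.ofReal_add (by positivity) ht.le]
  exact (ENNReal.add_le_add_iff_right ENNReal.ofReal_ne_top).mp h2

open Classical in
/-- One-sided (right) hitting bound, by reflection. -/
lemma hitting_right (q : ℕ) (L c : ℝ) (hL : 0 ≤ L) (hc : 0 < c) (a : Fin q → ℝ) :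
    MeasureTheory.volume
        {x : ℝ | x ∈ Set.Icc 0 L ∧ ∃ j : ℕ, 1 ≤ j ∧
          j ≤ (Finset.univ.filter (fun i => x ≤ a i ∧ a i < x + c * j)).card}
      ≤ ENNReal.ofReal (c * q) := by
  set a' : Fin q → ℝ := fun i => L - a i with ha'
  set B := {x : ℝ | x ∈ Set.Icc 0 L ∧ ∃ j : ℕ, 1 ≤ j ∧
      j ≤ (Finset.univ.filter (fun i => x - c * j < a' i ∧ a' i ≤ x)).card} with hBdef
  have hcard : ∀ x : ℝ, ∀ j : ℕ,
      (Finset.univ.filter (fun i => x ≤ a i ∧ a i < x + c * j)).card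
      = (Finset.univ.filter (fun i => (L - x) - c * j < a' i ∧ a' i ≤ (L - x))).card := by
    intro x j
    congr 1
    apply Finset.filter_congr
    intro i _
    simp only [ha', eq_iff_iff]
    constructor
    · rintro ⟨h1, h2⟩; exact ⟨by linarith, by linarith⟩
    · rintro ⟨h1, h2⟩; exact ⟨by linarith, by linarith⟩
  have hpre : {x : ℝ | x ∈ Set.Icc 0 L ∧ ∃ j : ℕ, 1 ≤ j ∧
      j ≤ (Finset.univ.filter (fun i => x ≤ a i ∧ a i < x + c * j)).card}
      = (fun x : ℝ => L - x) ⁻¹' B := by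
    ext x
    simp only [Set.mem_preimage, hBdef, Set.mem_setOf_eq, Set.mem_Icc]
    constructor
    · rintro ⟨⟨hx0, hxL⟩, j, hj, hc2⟩
      exact ⟨⟨by linarith, by linarith⟩, j, hj, le_trans hc2 (le_of_eq (hcard x j))⟩
    · rintro ⟨⟨hx0, hxL⟩, j, hj, hc2⟩
      exact ⟨⟨by linarith, by linarith⟩, j, hj, le_trans hc2 (le_of_eq (hcard x j).symm)⟩
  rw [hpre]
  have hmp : MeasureTheory.MeasurePreserving (fun x : ℝ => L - x)
      MeasureTheory.volume MeasureTheory.volume :=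
    MeasureTheory.Measure.measurePreserving_sub_left MeasureTheory.volume L
  rw [hmp.measure_preimage (hitting_bad_measurable q L c a').nullMeasurableSet]
  exact hitting_left q L c hL hc a'

open Classical in
/-- Hitting Lemma (additive form). Let `a₁,…,a_q ∈ [0,L]`. A point `x ∈ [0,L]`
is "hit" (`q_x < c`) if for some `j ≥ 1` the `j`-th point of `{aᵢ}` to its left
(resp. right) is at distance `< c·j`, i.e. at least `j` of the points lie in
`(x - c·j, x]` (resp. `[x, x + c·j)`). The set `S_c` of hit points has Lebesgue
measure at most `2·c·q`. -/
theorem hitting_lemma (q : ℕ) (L c : ℝ) (hL : 0 ≤ L) (hc : 0 < c)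
    (a : Fin q → ℝ) (ha : ∀ i, a i ∈ Set.Icc 0 L) :
    MeasureTheory.volume
        {x : ℝ | x ∈ Set.Icc 0 L ∧ ∃ j : ℕ, 1 ≤ j ∧
          (j ≤ (Finset.univ.filter (fun i => x - c * j < a i ∧ a i ≤ x)).card
            ∨ j ≤ (Finset.univ.filter (fun i => x ≤ a i ∧ a i < x + c * j)).card)}
      ≤ ENNReal.ofReal (2 * c * q) := by
  have hsub : {x : ℝ | x ∈ Set.Icc 0 L ∧ ∃ j : ℕ, 1 ≤ j ∧
          (j ≤ (Finset.univ.filter (fun i => x - c * j < a i ∧ a i ≤ x)).card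
            ∨ j ≤ (Finset.univ.filter (fun i => x ≤ a i ∧ a i < x + c * j)).card)}
      ⊆ {x : ℝ | x ∈ Set.Icc 0 L ∧ ∃ j : ℕ, 1 ≤ j ∧
          j ≤ (Finset.univ.filter (fun i => x - c * j < a i ∧ a i ≤ x)).card}
        ∪ {x : ℝ | x ∈ Set.Icc 0 L ∧ ∃ j : ℕ, 1 ≤ j ∧
          j ≤ (Finset.univ.filter (fun i => x ≤ a i ∧ a i < x + c * j)).card} := by
    rintro x ⟨hx, j, hj, hor⟩
    rcases hor with h1 | h1
    · exact Or.inl ⟨hx, j, hj, h1⟩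
    · exact Or.inr ⟨hx, j, hj, h1⟩
  refine le_trans (MeasureTheory.measure_mono hsub)
    (le_trans (MeasureTheory.measure_union_le _ _) ?_)
  have h1 := hitting_left q L c hL hc a
  have h2 := hitting_right q L c hL hc a
  calc _ ≤ ENNReal.ofReal (c * q) + ENNReal.ofReal (c * q) := add_le_add h1 h2
    _ = ENNReal.ofReal (2 * c * q) := by
        rw [← ENNReal.ofReal_add (by positivity) (by positivity)]
        ring_nf
end

section
/- Left-side Hitting Lemma: Let a₁ ≤ a₂ ≤ ... ≤ a_q be points in [0, L]. For x ∈ [0,L] and 1 ≤ j ≤ q, let ℓ_j^x denote the distance from x to the j-th point to its left among a₁,...,a_q (or +∞ if fewer than j points lie at or to the left of x). For c > 0, the set S_{c,ℓ} = {x : ∃ j, ℓ_j^x/j < c} has Lebesgue measure at most cq. -/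
/-- Workload recursion: `hitE b c k` is the virtual finishing time after serving the
first `k` points `b 0, …, b (k-1)`, each requiring service time `c`. -/
def hitE (b : ℕ → ℝ) (c : ℝ) : ℕ → ℝ
  | 0 => b 0
  | k+1 => max (b k) (hitE b c k) + c

lemma hitE_lb (b : ℕ → ℝ) (c : ℝ) (hc : 0 < c) (hb : Monotone b) :
    ∀ i k : ℕ, i < k → b i + c * ((k - i : ℕ) : ℝ) ≤ hitE b c k := by
  intro i k
  induction k with
  | zero => omega
  | succ k ih =>
    intro h
    rcases Nat.lt_succ_iff_lt_or_eq.mp h with h' | h'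
    · have h1 := ih h'
      have h2 : hitE b c k + c ≤ hitE b c (k+1) := by
        have := le_max_right (b k) (hitE b c k)
        simp only [hitE]
        linarith
      have h3 : ((k + 1 - i : ℕ) : ℝ) = ((k - i : ℕ) : ℝ) + 1 := by
        have : k + 1 - i = (k - i) + 1 := by omega
        rw [this]; push_cast; ring
      rw [h3]; linarith
    · subst h'
      have h3 : ((i + 1 - i : ℕ) : ℝ) = 1 := by
        have : i + 1 - i = 1 := by omega
        rw [this]; norm_num
      have := le_max_left (b i) (hitE b c i)
      simp only [hitE]
      rw [h3]; linarith

open Classical in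
/-- Left-side Hitting Lemma. Let `a₁ ≤ … ≤ a_q` be points in `[0,L]`. The set
`S_{c,ℓ}` of points `x` such that for some `j ≥ 1` the `j`-th point to the left
of `x` is at distance `< c·j` (equivalently, at least `j` of the points lie in
`(x - c·j, x]`) has Lebesgue measure at most `c·q`. -/
theorem left_hitting_lemma (q : ℕ) (L c : ℝ) (hL : 0 ≤ L) (hc : 0 < c)
    (a : Fin q → ℝ) (ha : ∀ i, a i ∈ Set.Icc 0 L) (hmono : Monotone a) :
    MeasureTheory.volume
        {x : ℝ | x ∈ Set.Icc 0 L ∧ ∃ j : ℕ, 1 ≤ j ∧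
          j ≤ (Finset.univ.filter (fun i => x - c * j < a i ∧ a i ≤ x)).card}
      ≤ ENNReal.ofReal (c * q) := by
  rcases Nat.eq_zero_or_pos q with hq | hq
  · subst hq
    have : {x : ℝ | x ∈ Set.Icc 0 L ∧ ∃ j : ℕ, 1 ≤ j ∧
          j ≤ (Finset.univ.filter (fun i => x - c * j < a i ∧ a i ≤ x)).card} = ∅ := by
      ext x
      simp only [Set.mem_setOf_eq, Set.mem_empty_iff_false, iff_false, not_and]
      rintro - ⟨j, hj1, hj2⟩
      have : (Finset.univ.filter (fun i : Fin 0 => x - c * j < a i ∧ a i ≤ x)).card = 0 := by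
        simp
      omega
    rw [this]
    simp
  -- main case `1 ≤ q`
  have hq1 : q - 1 < q := Nat.sub_lt hq one_pos
  set b : ℕ → ℝ := fun i => a ⟨min i (q-1), lt_of_le_of_lt (min_le_right _ _) hq1⟩ with hbdef
  have hbmono : Monotone b := by
    intro i j hij
    exact hmono (by simp [Fin.le_def]; omega)
  have hbval : ∀ m (h : m < q), b m = a ⟨m, h⟩ := by
    intro m h
    simp only [hbdef]
    congr 1
    exact Fin.ext (by simp; omega)
  -- the covering intervals
  set J : ℕ → Set ℝ := fun k => Set.Ico (max (b k) (hitE b c k)) (hitE b c (k+1)) with hJdef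
  have cover : {x : ℝ | x ∈ Set.Icc 0 L ∧ ∃ j : ℕ, 1 ≤ j ∧
          j ≤ (Finset.univ.filter (fun i => x - c * j < a i ∧ a i ≤ x)).card}
      ⊆ ⋃ k ∈ Finset.range q, J k := by
    rintro x ⟨hxI, j, hj1, hj2⟩
    by_contra hx
    set T : Finset (Fin q) := Finset.univ.filter (fun i => a i ≤ x) with hTdef
    set K : ℕ := T.card with hKdef
    have hKq : K ≤ q := le_trans (Finset.card_filter_le _ _) (by simp)
    have hjK : j ≤ K := by
      refine le_trans hj2 (Finset.card_le_card ?_)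
      intro i hi
      simp only [Finset.mem_filter, hTdef] at hi ⊢
      exact ⟨Finset.mem_univ _, hi.2.2⟩
    have hK1 : 1 ≤ K := le_trans hj1 hjK
    -- (iii) indices ≥ K are to the right of x
    have hupper : ∀ i : Fin q, K ≤ i.val → x < a i := by
      intro i hi
      by_contra hcon
      push_neg at hcon
      have hinj : (Finset.range (i.val + 1)).card ≤ T.card := by
        apply Finset.card_le_card_of_injOn
          (fun k => (⟨min k i.val, lt_of_le_of_lt (min_le_right _ _) i.isLt⟩ : Fin q))
        · intro k hk
          simp only [Finset.mem_coe, Finset.mem_range] at hk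
          simp only [Finset.mem_coe, hTdef, Finset.mem_filter, Finset.mem_univ, true_and]
          exact le_trans (hmono (by simp [Fin.le_def])) hcon
        · intro k1 hk1 k2 hk2 he
          simp only [Finset.mem_coe, Finset.mem_range] at hk1 hk2
          have := congrArg Fin.val he
          simp at this
          omega
      simp only [Finset.card_range] at hinj
      omega
    -- (i) the point with index K-1 is at or left of x
    have hKlt : K - 1 < q := by omega
    have hK1x : a ⟨K - 1, hKlt⟩ ≤ x := by
      by_contra hcon
      push_neg at hcon
      have hinj : T.card ≤ (Finset.range (K - 1)).card := by
        apply Finset.card_le_card_of_injOn (fun i => i.val)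
        · intro i hi
          simp only [Finset.mem_coe, hTdef, Finset.mem_filter, Finset.mem_univ, true_and] at hi
          simp only [Finset.mem_coe, Finset.mem_range]
          by_contra hge
          push_neg at hge
          have : a ⟨K - 1, hKlt⟩ ≤ a i := hmono (by simp [Fin.le_def]; omega)
          linarith
        · intro i1 _ i2 _ he
          exact Fin.ext he
      simp only [Finset.card_range] at hinj
      omega
    -- (ii) the point with index K-j is within c*j of x
    have hKjlt : K - j < q := by omega
    have hKjx : x - c * j < a ⟨K - j, hKjlt⟩ := by
      by_contra hcon
      push_neg at hcon
      have hinj : (Finset.univ.filter (fun i => x - c * j < a i ∧ a i ≤ x)).card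
          ≤ (Finset.Ico (K - j + 1) K).card := by
        apply Finset.card_le_card_of_injOn (fun i => i.val)
        · intro i hi
          simp only [Finset.mem_coe, Finset.mem_filter, Finset.mem_univ, true_and] at hi
          simp only [Finset.mem_coe, Finset.mem_Ico]
          constructor
          · by_contra hle
            push_neg at hle
            have : a i ≤ a ⟨K - j, hKjlt⟩ := hmono (by simp [Fin.le_def]; omega)
            linarith [hi.1]
          · by_contra hge
            push_neg at hge
            exact absurd hi.2 (not_le.mpr (hupper i hge))
        · intro i1 _ i2 _ he
          exact Fin.ext he
      rw [Nat.card_Ico] at hinj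
      omega
    -- key: since x is in no interval J k, the workload catches up: hitE (k+1) ≤ x
    have key : ∀ k, k < q → b k ≤ x → hitE b c (k+1) ≤ x := by
      intro k
      induction k with
      | zero =>
        intro hk hbk
        have hm : max (b 0) (hitE b c 0) ≤ x := by
          simp only [hitE]
          exact max_le hbk hbk
        by_contra hcon
        push_neg at hcon
        exact hx (Set.mem_biUnion (Finset.mem_range.mpr hk) ⟨hm, hcon⟩)
      | succ k ih =>
        intro hk hbk
        have hEk : hitE b c (k+1) ≤ x := ih (by omega) (le_trans (hbmono (Nat.le_succ k)) hbk)
        have hm : max (b (k+1)) (hitE b c (k+1)) ≤ x := max_le hbk hEk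
        by_contra hcon
        push_neg at hcon
        exact hx (Set.mem_biUnion (Finset.mem_range.mpr hk) ⟨hm, hcon⟩)
    have hEKle : hitE b c K ≤ x := by
      have := key (K - 1) hKlt (by rw [hbval (K-1) hKlt]; exact hK1x)
      have hKeq : K - 1 + 1 = K := by omega
      rwa [hKeq] at this
    have hEKgt : x < hitE b c K := by
      have hlb := hitE_lb b c hc hbmono (K - j) K (by omega)
      have h1 : ((K - (K - j) : ℕ) : ℝ) = (j : ℝ) := by
        have : K - (K - j) = j := by omega
        rw [this]
      rw [h1, hbval (K - j) hKjlt] at hlb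
      nlinarith
    linarith
  calc MeasureTheory.volume _ ≤ MeasureTheory.volume (⋃ k ∈ Finset.range q, J k) :=
        MeasureTheory.measure_mono cover
    _ ≤ ∑ k ∈ Finset.range q, MeasureTheory.volume (J k) :=
        MeasureTheory.measure_biUnion_finset_le _ _
    _ = ∑ k ∈ Finset.range q, ENNReal.ofReal c := by
        apply Finset.sum_congr rfl
        intro k _
        simp only [hJdef, Real.volume_Ico, hitE]
        congr 1
        ring
    _ = ENNReal.ofReal (c * q) := by
        rw [Finset.sum_const, Finset.card_range, nsmul_eq_mul,
          ENNReal.ofReal_mul hc.le, mul_comm]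
        congr 1
        simp
end
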